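/- arXiv:2411.00191 — 2 statements merged into one kernel-verified Lean document; each statement's English description precedes it below -/
import Mathlib

section
/- Let BL = { f : ℝ → ℝ : f is 1-Lipschitz and |f(x)| ≤ 1 for all x }. Fix π ∈ (0,1) and C > 0. For each N ≥ 1 let y_{N,1},…,y_{N,N} ∈ ℝ with (1/N) ∑_i |y_{N,i}| ≤ C, and let T_{N,1},…,T_{N,N} be i.i.d. Bernoulli(π) random variables. Then sup_{f ∈ BL} | (1/(Nπ)) ∑_i T_{N,i} f(y_{N,i}) − (1/N) ∑_i f(y_{N,i}) | → 0 in probability as N → ∞. That is, the bounded-Lipschitz class is P-Glivenko–Cantelli for Horvitz–Thompson empirical distributions over L¹-bounded finite populations under Bernoulli sampling. -/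
open MeasureTheory ProbabilityTheory

/-- The Bernoulli(π) distribution on `ℝ`: mass `π` at `1` and mass `1 - π` at `0`. -/
noncomputable def bernoulliReal (π : ℝ) : Measure ℝ :=
  ENNReal.ofReal π • Measure.dirac (1 : ℝ) + ENNReal.ofReal (1 - π) • Measure.dirac (0 : ℝ)

/-- The class of 1-bounded 1-Lipschitz functions `ℝ → [-1,1]`. -/
def BL : Set (ℝ → ℝ) :=
  {f : ℝ → ℝ | LipschitzWith 1 f ∧ ∀ x, |f x| ≤ 1}

instance : Nonempty BL :=
  ⟨⟨fun _ => 0, (LipschitzWith.const (0:ℝ)).weaken zero_le_one, fun x => by norm_num⟩⟩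


lemma integral_bernoulliReal {π : ℝ} (h0 : 0 ≤ π) (h1 : π ≤ 1) (g : ℝ → ℝ) :
    ∫ x, g x ∂(bernoulliReal π) = π * g 1 + (1 - π) * g 0 := by
  have hint : ∀ (c : ℝ) (a : ℝ), 0 ≤ c →
      Integrable g (ENNReal.ofReal c • Measure.dirac a) := by
    intro c a hc
    have h1 : Integrable g (Measure.dirac a) := by
      have : g =ᵐ[Measure.dirac a] (fun _ => g a) := by
        rw [MeasureTheory.ae_dirac_eq]
        exact Filter.eventually_pure.mpr rfl
      exact (integrable_const (g a)).congr this.symm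
    exact h1.smul_measure ENNReal.ofReal_ne_top
  rw [bernoulliReal, integral_add_measure (hint π 1 h0) (hint (1-π) 0 (by linarith)),
    integral_smul_measure, integral_smul_measure, integral_dirac, integral_dirac,
    ENNReal.toReal_ofReal h0, ENNReal.toReal_ofReal (by linarith : (0:ℝ) ≤ 1 - π)]
  simp [smul_eq_mul]

lemma bernoulliReal_ae {π : ℝ} (h0 : 0 ≤ π) (h1 : π ≤ 1) :
    bernoulliReal π ({0, 1} : Set ℝ)ᶜ = 0 := by
  rw [bernoulliReal]
  have hm : MeasurableSet (({0, 1} : Set ℝ)ᶜ) :=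
    (Set.Finite.measurableSet (by simp : Set.Finite ({0,1} : Set ℝ))).compl
  simp [Measure.add_apply, Measure.smul_apply, Measure.dirac_apply' _ hm,
    Set.indicator_apply]

section
variable {Ω : Type*} [MeasurableSpace Ω] {P : Measure Ω} [IsProbabilityMeasure P]
  {T : Ω → ℝ} {π : ℝ}

lemma T_ae (hπ0 : 0 ≤ π) (hπ1 : π ≤ 1) (hTm : Measurable T)
    (hTl : Measure.map T P = bernoulliReal π) :
    ∀ᵐ ω ∂P, T ω = 0 ∨ T ω = 1 := by
  have hm : MeasurableSet (({0, 1} : Set ℝ)ᶜ) :=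
    (Set.Finite.measurableSet (by simp : Set.Finite ({0,1} : Set ℝ))).compl
  have : P (T ⁻¹' ({0, 1} : Set ℝ)ᶜ) = 0 := by
    rw [← Measure.map_apply hTm hm, hTl, bernoulliReal_ae hπ0 hπ1]
  rw [ae_iff]
  have hset : {ω | ¬(T ω = 0 ∨ T ω = 1)} = T ⁻¹' ({0, 1} : Set ℝ)ᶜ := by
    ext ω; simp [not_or]
  rw [hset]; exact this

lemma integral_comp_T (hπ0 : 0 ≤ π) (hπ1 : π ≤ 1) (hTm : Measurable T)
    (hTl : Measure.map T P = bernoulliReal π) (g : ℝ → ℝ) (hg : Measurable g) :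
    ∫ ω, g (T ω) ∂P = π * g 1 + (1 - π) * g 0 := by
  rw [← integral_bernoulliReal hπ0 hπ1 g, ← hTl,
    integral_map hTm.aemeasurable hg.aestronglyMeasurable]

end

lemma det_bound {π δ M : ℝ} (hπ0 : 0 < π) (hπ1 : π ≤ 1) (hδ : 0 < δ) (hM : 0 < M)
    {K N : ℕ} (hK : M ≤ -M + K * δ) (hN : 1 ≤ N) (yv : Fin N → ℝ) (t : Fin N → ℝ)
    (ht : ∀ i, t i = 0 ∨ t i = 1) (f : ℝ → ℝ) (hf : LipschitzWith 1 f)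
    (hfb : ∀ x, |f x| ≤ 1) :
    |(∑ i, t i * f (yv i)) / ((N : ℝ) * π) - (∑ i, f (yv i)) / (N : ℝ)| ≤
      (∑ j ∈ Finset.range K,
        |(∑ i ∈ Finset.univ.filter
            (fun i => (-M ≤ yv i ∧ yv i < -M + K * δ) ∧ ⌊(yv i + M) / δ⌋₊ = j),
          (t i / π - 1))| / N)
      + δ / π + (∑ i, |yv i|) / ((N : ℝ) * M * π) := by
  have hNpos : (0:ℝ) < N := by exact_mod_cast hN
  have hNne : (N:ℝ) ≠ 0 := ne_of_gt hNpos
  have hπne : π ≠ 0 := ne_of_gt hπ0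
  set a : Fin N → ℝ := fun i => t i / π - 1 with ha_def
  have ha : ∀ i, |a i| ≤ 1 / π := by
    intro i
    rcases ht i with h | h
    · have hv : a i = -1 := by rw [ha_def]; simp [h]
      rw [hv, abs_neg, abs_one, le_div_iff₀ hπ0]; linarith
    · have hv : a i = 1 / π - 1 := by rw [ha_def]; simp [h]
      have h0 : (0:ℝ) ≤ 1 / π - 1 := by
        rw [sub_nonneg, le_div_iff₀ hπ0]; linarith
      rw [hv, abs_of_nonneg h0]; linarith
  -- step 1 : rewrite LHS
  have step1 : (∑ i, t i * f (yv i)) / ((N : ℝ) * π) - (∑ i, f (yv i)) / (N : ℝ)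
      = (∑ i, a i * f (yv i)) / N := by
    have : ∑ i, a i * f (yv i)
        = (∑ i, t i * f (yv i)) / π - ∑ i, f (yv i) := by
      rw [Finset.sum_div, ← Finset.sum_sub_distrib]
      refine Finset.sum_congr rfl fun i _ => by rw [ha_def]; ring
    rw [this]
    field_simp
  rw [step1, abs_div, abs_of_pos hNpos]
  -- main/tail split
  set mainP : Fin N → Prop := fun i => -M ≤ yv i ∧ yv i < -M + K * δ with hmainP
  have hsplit : ∑ i, a i * f (yv i)
      = (∑ i ∈ Finset.univ.filter mainP, a i * f (yv i))
        + ∑ i ∈ Finset.univ.filter (fun i => ¬ mainP i), a i * f (yv i) :=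
    (Finset.sum_filter_add_sum_filter_not _ _ _).symm
  -- tail bound
  have tail : |∑ i ∈ Finset.univ.filter (fun i => ¬ mainP i), a i * f (yv i)|
      ≤ (∑ i, |yv i|) / (M * π) := by
    calc |∑ i ∈ Finset.univ.filter (fun i => ¬ mainP i), a i * f (yv i)|
        ≤ ∑ i ∈ Finset.univ.filter (fun i => ¬ mainP i), |a i * f (yv i)| :=
          Finset.abs_sum_le_sum_abs _ _
      _ ≤ ∑ i ∈ Finset.univ.filter (fun i => ¬ mainP i), |yv i| / (M * π) := by
          refine Finset.sum_le_sum fun i hi => ?_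
          have hi' : ¬ mainP i := (Finset.mem_filter.mp hi).2
          have hMy : M ≤ |yv i| := by
            have hi2 : ¬ (-M ≤ yv i ∧ yv i < -M + K * δ) := hi'
            push_neg at hi2
            rcases le_or_gt (-M) (yv i) with h | h
            · have h2 : M ≤ yv i := le_trans hK (hi2 h)
              calc M ≤ yv i := h2
                _ ≤ |yv i| := le_abs_self _
            · calc M ≤ -(yv i) := by linarith
                _ ≤ |yv i| := neg_le_abs _
          have h1 : |a i * f (yv i)| ≤ 1 / π := by
            rw [abs_mul]
            calc |a i| * |f (yv i)| ≤ (1/π) * 1 :=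
              mul_le_mul (ha i) (hfb _) (abs_nonneg _) (by positivity)
            _ = 1 / π := by ring
          calc |a i * f (yv i)| ≤ 1 / π := h1
            _ ≤ |yv i| / (M * π) := by
                rw [div_le_div_iff₀ hπ0 (by positivity)]
                nlinarith [abs_nonneg (yv i)]
      _ ≤ ∑ i, |yv i| / (M * π) :=
          Finset.sum_le_sum_of_subset_of_nonneg (Finset.filter_subset _ _)
            (fun i _ _ => by positivity)
      _ = (∑ i, |yv i|) / (M * π) := by rw [Finset.sum_div]
  -- main bound
  set idx : Fin N → ℕ := fun i => ⌊(yv i + M) / δ⌋₊ with hidx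
  set cell : ℕ → Finset (Fin N) :=
    fun j => Finset.univ.filter (fun i => mainP i ∧ idx i = j) with hcell
  have hmaps : ∀ i ∈ Finset.univ.filter mainP, idx i ∈ Finset.range K := by
    intro i hi
    have hi' : mainP i := (Finset.mem_filter.mp hi).2
    rw [Finset.mem_range, hidx]
    have h0 : 0 ≤ (yv i + M) / δ := by
      apply div_nonneg _ (le_of_lt hδ); linarith [hi'.1]
    rw [Nat.floor_lt h0, div_lt_iff₀ hδ]
    linarith [hi'.2]
  have hfiber : ∑ i ∈ Finset.univ.filter mainP, a i * f (yv i)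
      = ∑ j ∈ Finset.range K, ∑ i ∈ (Finset.univ.filter mainP).filter (fun i => idx i = j),
          a i * f (yv i) :=
    (Finset.sum_fiberwise_of_maps_to hmaps _).symm
  have hcelleq : ∀ j, (Finset.univ.filter mainP).filter (fun i => idx i = j) = cell j := by
    intro j
    rw [hcell, Finset.filter_filter]
  have main : |∑ i ∈ Finset.univ.filter mainP, a i * f (yv i)|
      ≤ (∑ j ∈ Finset.range K, |∑ i ∈ cell j, a i|) + N * (δ / π) := by
    rw [hfiber]
    calc |∑ j ∈ Finset.range K, ∑ i ∈ (Finset.univ.filter mainP).filter (fun i => idx i = j),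
            a i * f (yv i)|
        ≤ ∑ j ∈ Finset.range K, |∑ i ∈ (Finset.univ.filter mainP).filter (fun i => idx i = j),
            a i * f (yv i)| := Finset.abs_sum_le_sum_abs _ _
      _ ≤ ∑ j ∈ Finset.range K, (|∑ i ∈ cell j, a i| + ∑ i ∈ cell j, δ / π) := by
          refine Finset.sum_le_sum fun j _ => ?_
          rw [hcelleq j]
          have hdecomp : ∑ i ∈ cell j, a i * f (yv i)
              = (∑ i ∈ cell j, a i) * f (-M + j * δ)
                + ∑ i ∈ cell j, a i * (f (yv i) - f (-M + j * δ)) := by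
            rw [Finset.sum_mul, ← Finset.sum_add_distrib]
            refine Finset.sum_congr rfl fun i _ => by ring
          rw [hdecomp]
          calc |(∑ i ∈ cell j, a i) * f (-M + j * δ)
                + ∑ i ∈ cell j, a i * (f (yv i) - f (-M + j * δ))|
              ≤ |(∑ i ∈ cell j, a i) * f (-M + j * δ)|
                + |∑ i ∈ cell j, a i * (f (yv i) - f (-M + j * δ))| := abs_add_le _ _
            _ ≤ |∑ i ∈ cell j, a i| + ∑ i ∈ cell j, δ / π := by
                refine add_le_add ?_ ?_
                · rw [abs_mul]
                  calc |∑ i ∈ cell j, a i| * |f (-M + j * δ)|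
                      ≤ |∑ i ∈ cell j, a i| * 1 :=
                        mul_le_mul_of_nonneg_left (hfb _) (abs_nonneg _)
                    _ = |∑ i ∈ cell j, a i| := mul_one _
                · calc |∑ i ∈ cell j, a i * (f (yv i) - f (-M + j * δ))|
                      ≤ ∑ i ∈ cell j, |a i * (f (yv i) - f (-M + j * δ))| :=
                        Finset.abs_sum_le_sum_abs _ _
                    _ ≤ ∑ i ∈ cell j, δ / π := by
                        refine Finset.sum_le_sum fun i hi => ?_
                        have hi' := Finset.mem_filter.mp (by rw [hcell] at hi; exact hi)
                        obtain ⟨hmain, hidxi⟩ := hi'.2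
                        have h0 : 0 ≤ (yv i + M) / δ := by
                          apply div_nonneg _ (le_of_lt hδ); linarith [hmain.1]
                        have hfl := Nat.floor_eq_iff h0 |>.mp hidxi
                        have hlo : (j:ℝ) * δ ≤ yv i + M := by
                          rw [← le_div_iff₀ hδ]; exact hfl.1
                        have hhi : yv i + M < (j:ℝ) * δ + δ := by
                          have := hfl.2
                          rw [div_lt_iff₀ hδ] at this
                          linarith [this]
                        have hdist : |yv i - (-M + j * δ)| ≤ δ := by
                          rw [abs_le]; constructor <;> linarith
                        have hlip : |f (yv i) - f (-M + j * δ)| ≤ δ := by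
                          have := hf.dist_le_mul (yv i) (-M + j * δ)
                          rw [Real.dist_eq, Real.dist_eq] at this
                          simpa using le_trans this (by simpa using hdist)
                        rw [abs_mul]
                        calc |a i| * |f (yv i) - f (-M + j * δ)|
                            ≤ (1/π) * δ :=
                              mul_le_mul (ha i) hlip (abs_nonneg _) (by positivity)
                          _ = δ / π := by ring
      _ = (∑ j ∈ Finset.range K, |∑ i ∈ cell j, a i|)
            + ∑ j ∈ Finset.range K, ∑ i ∈ cell j, δ / π := Finset.sum_add_distrib
      _ ≤ (∑ j ∈ Finset.range K, |∑ i ∈ cell j, a i|) + N * (δ / π) := by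
          gcongr
          have : ∑ j ∈ Finset.range K, ∑ i ∈ cell j, δ / π
              = ∑ i ∈ Finset.univ.filter mainP, δ / π := by
            rw [← Finset.sum_fiberwise_of_maps_to hmaps (fun _ => δ / π)]
            exact Finset.sum_congr rfl fun j _ => by rw [hcelleq j]
          rw [this]
          calc ∑ i ∈ Finset.univ.filter mainP, δ / π
              ≤ ∑ i : Fin N, δ / π :=
                Finset.sum_le_sum_of_subset_of_nonneg (Finset.filter_subset _ _)
                  (fun _ _ _ => by positivity)
            _ = N * (δ / π) := by simp [Finset.sum_const, Finset.card_univ, mul_comm]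
  -- combine
  have hcomb : |∑ i, a i * f (yv i)|
      ≤ (∑ j ∈ Finset.range K, |∑ i ∈ cell j, a i|) + N * (δ / π)
        + (∑ i, |yv i|) / (M * π) := by
    rw [hsplit]
    calc |(∑ i ∈ Finset.univ.filter mainP, a i * f (yv i))
          + ∑ i ∈ Finset.univ.filter (fun i => ¬ mainP i), a i * f (yv i)|
        ≤ |∑ i ∈ Finset.univ.filter mainP, a i * f (yv i)|
          + |∑ i ∈ Finset.univ.filter (fun i => ¬ mainP i), a i * f (yv i)| := abs_add_le _ _
      _ ≤ _ := by gcongr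
  rw [div_le_iff₀ hNpos]
  have hsumdiv : ∑ j ∈ Finset.range K,
      |(∑ i ∈ Finset.univ.filter
          (fun i => (-M ≤ yv i ∧ yv i < -M + K * δ) ∧ ⌊(yv i + M) / δ⌋₊ = j),
        (t i / π - 1))| / N
      = (∑ j ∈ Finset.range K, |∑ i ∈ cell j, a i|) / N := by
    rw [Finset.sum_div]
  have hmul : ((∑ j ∈ Finset.range K, |∑ i ∈ cell j, a i|) / N + δ / π
      + (∑ i, |yv i|) / ((N : ℝ) * M * π)) * N
      = (∑ j ∈ Finset.range K, |∑ i ∈ cell j, a i|) + N * (δ / π)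
        + (∑ i, |yv i|) / (M * π) := by
    field_simp
  rw [hsumdiv, hmul]
  exact hcomb


lemma GC_sqrt_atTop : Filter.Tendsto Real.sqrt Filter.atTop Filter.atTop := by
  rw [Filter.tendsto_atTop_atTop]
  intro b
  refine ⟨(max b 0)^2, fun a ha => le_trans (le_max_left b 0) ?_⟩
  rw [← Real.sqrt_sq (le_max_right b 0)]
  exact Real.sqrt_le_sqrt ha

section moment
variable {Ω : Type*} [MeasurableSpace Ω] {P : Measure Ω} [IsProbabilityMeasure P] {π : ℝ}

lemma GC_sq_sum_moment (hπ0 : 0 < π) (hπ1 : π < 1) {N : ℕ} (T : Fin N → Ω → ℝ)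
    (hTm : ∀ i, Measurable (T i)) (hTi : iIndepFun T P)
    (hTl : ∀ i, Measure.map (T i) P = bernoulliReal π) (s : Finset (Fin N)) :
    ∫ ω, (∑ i ∈ s, (T i ω / π - 1))^2 ∂P = s.card * (1/π - 1) := by
  have hπne : π ≠ 0 := ne_of_gt hπ0
  set a : Fin N → Ω → ℝ := fun i ω => T i ω / π - 1 with ha_def
  have ham : ∀ i, Measurable (a i) := fun i => ((hTm i).div_const π).sub measurable_const
  have haae : ∀ i, ∀ᵐ ω ∂P, |a i ω| ≤ 1/π := by
    intro i
    filter_upwards [T_ae (le_of_lt hπ0) (le_of_lt hπ1) (hTm i) (hTl i)] with ω hω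
    rcases hω with h | h
    · have hv : a i ω = -1 := by rw [ha_def]; simp [h]
      rw [hv, abs_neg, abs_one, le_div_iff₀ hπ0]; linarith
    · have hv : a i ω = 1 / π - 1 := by rw [ha_def]; simp [h]
      have h0 : (0:ℝ) ≤ 1 / π - 1 := by rw [sub_nonneg, le_div_iff₀ hπ0]; linarith
      rw [hv, abs_of_nonneg h0]; linarith
  have haint : ∀ i, Integrable (a i) P := by
    intro i
    refine ⟨(ham i).aestronglyMeasurable, HasFiniteIntegral.of_bounded (C := 1/π) ?_⟩
    filter_upwards [haae i] with ω hω using by simpa using hω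
  have hprodint : ∀ i k, Integrable (fun ω => a i ω * a k ω) P := by
    intro i k
    refine ⟨((ham i).mul (ham k)).aestronglyMeasurable,
      HasFiniteIntegral.of_bounded (C := (1/π)^2) ?_⟩
    filter_upwards [haae i, haae k] with ω h1 h2
    rw [Real.norm_eq_abs, abs_mul, sq]
    exact mul_le_mul h1 h2 (abs_nonneg _) (by positivity)
  have hEa : ∀ i, ∫ ω, a i ω ∂P = 0 := by
    intro i
    have := integral_comp_T (P := P) (le_of_lt hπ0) (le_of_lt hπ1) (hTm i) (hTl i)
      (fun x => x / π - 1) ((measurable_id.div_const π).sub measurable_const)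
    rw [ha_def]
    simp only at this ⊢
    rw [this]
    field_simp
    ring
  have hEd : ∀ i, ∫ ω, a i ω * a i ω ∂P = 1/π - 1 := by
    intro i
    have := integral_comp_T (P := P) (le_of_lt hπ0) (le_of_lt hπ1) (hTm i) (hTl i)
      (fun x => (x / π - 1) * (x / π - 1))
      (((measurable_id.div_const π).sub measurable_const).mul
        ((measurable_id.div_const π).sub measurable_const))
    rw [ha_def]
    simp only at this ⊢
    rw [this]
    field_simp
    ring
  have hEc : ∀ i k, i ≠ k → ∫ ω, a i ω * a k ω ∂P = 0 := by
    intro i k hik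
    have hind : IndepFun (a i) (a k) P := by
      have h1 : IndepFun (T i) (T k) P := hTi.indepFun hik
      exact h1.comp ((measurable_id.div_const π).sub measurable_const)
        ((measurable_id.div_const π).sub measurable_const)
    have h2 := hind.integral_mul_eq_mul_integral (haint i).1 (haint k).1
    have h3 : ∫ ω, a i ω * a k ω ∂P = integral P (a i * a k) := rfl
    rw [h3, h2, hEa i, hEa k, mul_zero]
  have hsq : ∀ ω, (∑ i ∈ s, a i ω)^2 = ∑ i ∈ s, ∑ k ∈ s, a i ω * a k ω := by
    intro ω
    rw [sq, Finset.sum_mul_sum]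
  calc ∫ ω, (∑ i ∈ s, a i ω)^2 ∂P
      = ∫ ω, ∑ i ∈ s, ∑ k ∈ s, a i ω * a k ω ∂P := by
        exact integral_congr_ae (Filter.Eventually.of_forall hsq)
    _ = ∑ i ∈ s, ∑ k ∈ s, ∫ ω, a i ω * a k ω ∂P := by
        rw [integral_finset_sum s (fun i _ => integrable_finset_sum s
          (fun k _ => hprodint i k))]
        exact Finset.sum_congr rfl fun i _ =>
          integral_finset_sum s (fun k _ => hprodint i k)
    _ = ∑ i ∈ s, ∑ k ∈ s, (if i = k then 1/π - 1 else 0) := by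
        refine Finset.sum_congr rfl fun i _ => Finset.sum_congr rfl fun k _ => ?_
        by_cases h : i = k
        · rw [if_pos h, h, hEd k]
        · rw [if_neg h, hEc i k h]
    _ = ∑ i ∈ s, (1/π - 1) := by
        refine Finset.sum_congr rfl fun i hi => ?_
        rw [Finset.sum_ite_eq s i (fun _ => 1/π - 1), if_pos hi]
    _ = s.card * (1/π - 1) := by rw [Finset.sum_const, nsmul_eq_mul]

end moment

section cell
variable {Ω : Type*} [MeasurableSpace Ω] {P : Measure Ω} [IsProbabilityMeasure P] {π : ℝ}

lemma GC_cell_int (hπ0 : 0 < π) (hπ1 : π < 1) {N : ℕ} (T : Fin N → Ω → ℝ)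
    (hTm : ∀ i, Measurable (T i)) (hTl : ∀ i, Measure.map (T i) P = bernoulliReal π)
    (s : Finset (Fin N)) :
    Integrable (fun ω => |∑ i ∈ s, (T i ω / π - 1)| / (N : ℝ)) P := by
  have hmeas : Measurable (fun ω => |∑ i ∈ s, (T i ω / π - 1)| / (N : ℝ)) := by
    apply Measurable.div_const
    apply Measurable.abs
    exact Finset.measurable_sum s (fun i _ => ((hTm i).div_const π).sub measurable_const)
  refine ⟨hmeas.aestronglyMeasurable, HasFiniteIntegral.of_bounded (C := (N : ℝ) / π / N) ?_⟩
  have haae : ∀ i, ∀ᵐ ω ∂P, |T i ω / π - 1| ≤ 1/π := by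
    intro i
    filter_upwards [T_ae (le_of_lt hπ0) (le_of_lt hπ1) (hTm i) (hTl i)] with ω hω
    rcases hω with h | h
    · rw [h]; rw [zero_div, zero_sub, abs_neg, abs_one, le_div_iff₀ hπ0]; linarith
    · rw [h]
      have h0 : (0:ℝ) ≤ 1 / π - 1 := by rw [sub_nonneg, le_div_iff₀ hπ0]; linarith
      rw [abs_of_nonneg h0]; linarith
  have hall : ∀ᵐ ω ∂P, ∀ i ∈ s, |T i ω / π - 1| ≤ 1/π :=
    (ae_ball_iff s.countable_toSet).mpr (fun i _ => haae i)
  filter_upwards [hall] with ω hω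
  rw [Real.norm_eq_abs]
  rcases Nat.eq_zero_or_pos N with h | h
  · subst h; simp
  have hNpos : (0:ℝ) < N := by exact_mod_cast h
  rw [abs_div, abs_abs, abs_of_pos hNpos]
  refine (div_le_div_iff_of_pos_right hNpos).mpr ?_
  calc |∑ i ∈ s, (T i ω / π - 1)| ≤ ∑ i ∈ s, |T i ω / π - 1| := Finset.abs_sum_le_sum_abs _ _
    _ ≤ ∑ i ∈ s, 1/π := Finset.sum_le_sum hω
    _ = s.card * (1/π) := by rw [Finset.sum_const, nsmul_eq_mul]
    _ ≤ (N : ℝ) * (1/π) := by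
        have hcard : (s.card : ℝ) ≤ N := by
          have := Finset.card_le_univ s
          simp only [Finset.card_univ, Fintype.card_fin] at this
          exact_mod_cast this
        exact mul_le_mul_of_nonneg_right hcard (by positivity)
    _ = (N : ℝ) / π := by ring

lemma GC_cell_sq_int (hπ0 : 0 < π) (hπ1 : π < 1) {N : ℕ} (T : Fin N → Ω → ℝ)
    (hTm : ∀ i, Measurable (T i)) (hTl : ∀ i, Measure.map (T i) P = bernoulliReal π)
    (s : Finset (Fin N)) :
    Integrable (fun ω => (∑ i ∈ s, (T i ω / π - 1))^2) P := by
  have hmeas : Measurable (fun ω => (∑ i ∈ s, (T i ω / π - 1))^2) := by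
    apply Measurable.pow_const
    exact Finset.measurable_sum s (fun i _ => ((hTm i).div_const π).sub measurable_const)
  refine ⟨hmeas.aestronglyMeasurable, HasFiniteIntegral.of_bounded (C := ((N : ℝ) / π)^2) ?_⟩
  have haae : ∀ i, ∀ᵐ ω ∂P, |T i ω / π - 1| ≤ 1/π := by
    intro i
    filter_upwards [T_ae (le_of_lt hπ0) (le_of_lt hπ1) (hTm i) (hTl i)] with ω hω
    rcases hω with h | h
    · rw [h]; rw [zero_div, zero_sub, abs_neg, abs_one, le_div_iff₀ hπ0]; linarith
    · rw [h]
      have h0 : (0:ℝ) ≤ 1 / π - 1 := by rw [sub_nonneg, le_div_iff₀ hπ0]; linarith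
      rw [abs_of_nonneg h0]; linarith
  have hall : ∀ᵐ ω ∂P, ∀ i ∈ s, |T i ω / π - 1| ≤ 1/π :=
    (ae_ball_iff s.countable_toSet).mpr (fun i _ => haae i)
  filter_upwards [hall] with ω hω
  have hb : |∑ i ∈ s, (T i ω / π - 1)| ≤ (N : ℝ) / π := by
    calc |∑ i ∈ s, (T i ω / π - 1)| ≤ ∑ i ∈ s, |T i ω / π - 1| := Finset.abs_sum_le_sum_abs _ _
      _ ≤ ∑ i ∈ s, 1/π := Finset.sum_le_sum hω
      _ = s.card * (1/π) := by rw [Finset.sum_const, nsmul_eq_mul]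
      _ ≤ (N : ℝ) * (1/π) := by
          have hcard : (s.card : ℝ) ≤ N := by
            have := Finset.card_le_univ s
            simp only [Finset.card_univ, Fintype.card_fin] at this
            exact_mod_cast this
          exact mul_le_mul_of_nonneg_right hcard (by positivity)
      _ = (N : ℝ) / π := by ring
  rw [Real.norm_eq_abs, abs_of_nonneg (sq_nonneg _), ← sq_abs]
  exact pow_le_pow_left₀ (abs_nonneg _) hb 2

end cell

section cell2
variable {Ω : Type*} [MeasurableSpace Ω] {P : Measure Ω} [IsProbabilityMeasure P] {π : ℝ}

lemma GC_cell_exp (hπ0 : 0 < π) (hπ1 : π < 1) {N : ℕ} (hN : 1 ≤ N) (T : Fin N → Ω → ℝ)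
    (hTm : ∀ i, Measurable (T i)) (hTi : iIndepFun T P)
    (hTl : ∀ i, Measure.map (T i) P = bernoulliReal π) (s : Finset (Fin N)) :
    ∫ ω, |∑ i ∈ s, (T i ω / π - 1)| / (N : ℝ) ∂P ≤ 1 / Real.sqrt (N * π) := by
  have hNpos : (0:ℝ) < N := by exact_mod_cast hN
  set s₀ := Real.sqrt ((N : ℝ) * π) with hs₀def
  have hs₀pos : 0 < s₀ := Real.sqrt_pos.mpr (by positivity)
  have hs₀sq : s₀^2 = (N : ℝ) * π := Real.sq_sqrt (by positivity)
  -- pointwise bound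
  have hpt : ∀ ω, |∑ i ∈ s, (T i ω / π - 1)| / (N : ℝ)
      ≤ s₀ / (2 * (N:ℝ)^2) * (∑ i ∈ s, (T i ω / π - 1))^2 + 1 / (2 * s₀) := by
    intro ω
    set x := ∑ i ∈ s, (T i ω / π - 1) with hx
    have hkey : s₀ / (2 * (N:ℝ)^2) * x^2 + 1 / (2 * s₀) - |x| / N
        = (s₀ * |x| - N)^2 / (2 * s₀ * (N:ℝ)^2) := by
      rw [← sq_abs x]
      field_simp
      ring_nf
    nlinarith [div_nonneg (sq_nonneg (s₀ * |x| - (N:ℝ))) (by positivity : (0:ℝ) ≤ 2 * s₀ * (N:ℝ)^2), hkey]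
  have hint1 := GC_cell_int hπ0 hπ1 T hTm hTl s
  have hint2 := GC_cell_sq_int hπ0 hπ1 T hTm hTl s
  have hint3 : Integrable (fun ω => s₀ / (2 * (N:ℝ)^2) * (∑ i ∈ s, (T i ω / π - 1))^2
      + 1 / (2 * s₀)) P := (hint2.const_mul _).add (integrable_const _)
  calc ∫ ω, |∑ i ∈ s, (T i ω / π - 1)| / (N : ℝ) ∂P
      ≤ ∫ ω, (s₀ / (2 * (N:ℝ)^2) * (∑ i ∈ s, (T i ω / π - 1))^2 + 1 / (2 * s₀)) ∂P :=
        integral_mono hint1 hint3 hpt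
    _ = s₀ / (2 * (N:ℝ)^2) * (∫ ω, (∑ i ∈ s, (T i ω / π - 1))^2 ∂P) + 1 / (2 * s₀) := by
        rw [integral_add (hint2.const_mul _) (integrable_const _), integral_const_mul,
          integral_const]
        simp
    _ = s₀ / (2 * (N:ℝ)^2) * (s.card * (1/π - 1)) + 1 / (2 * s₀) := by
        rw [GC_sq_sum_moment hπ0 hπ1 T hTm hTi hTl s]
    _ ≤ s₀ / (2 * (N:ℝ)^2) * ((N : ℝ) * (1/π)) + 1 / (2 * s₀) := by
        have hcard : (s.card : ℝ) ≤ N := by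
          have := Finset.card_le_univ s
          simp only [Finset.card_univ, Fintype.card_fin] at this
          exact_mod_cast this
        have h1 : (0:ℝ) ≤ 1/π - 1 := by rw [sub_nonneg, le_div_iff₀ hπ0]; linarith
        have h2 : 1/π - 1 ≤ 1/π := by linarith
        have hmain : (s.card : ℝ) * (1/π - 1) ≤ (N : ℝ) * (1/π) :=
          le_trans (mul_le_mul_of_nonneg_right hcard h1)
            (mul_le_mul_of_nonneg_left h2 (by positivity))
        exact add_le_add_left (mul_le_mul_of_nonneg_left hmain (by positivity)) _
    _ = 1 / s₀ := by
        have hNπ : (N : ℝ) * π = s₀^2 := hs₀sq.symm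
        have hπne : π ≠ 0 := ne_of_gt hπ0
        have hs₀ne : s₀ ≠ 0 := ne_of_gt hs₀pos
        field_simp
        ring_nf
        linear_combination hs₀sq
    _ = 1 / Real.sqrt ((N : ℝ) * π) := rfl
  
end cell2

/-- **The bounded-Lipschitz class is P-Glivenko–Cantelli.** For finite populations
`y N : Fin N → ℝ` with `(1/N) ∑ |y N i| ≤ C` and i.i.d. Bernoulli(π) sampling indicators
`T N i`, the supremum over `BL` of the deviation of the Horvitz–Thompson empirical mean
from the population mean tends to `0` in probability as `N → ∞`. -/
theorem stmt_13 (π : ℝ) (hπ : π ∈ Set.Ioo (0 : ℝ) 1) (C : ℝ) (hC : 0 < C)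
    (y : (N : ℕ) → Fin N → ℝ)
    (hmom : ∀ N : ℕ, 1 ≤ N → (∑ i, |y N i|) / (N : ℝ) ≤ C)
    (Ω : ℕ → Type*) [∀ N, MeasurableSpace (Ω N)]
    (P : (N : ℕ) → Measure (Ω N)) [∀ N, IsProbabilityMeasure (P N)]
    (T : (N : ℕ) → Fin N → Ω N → ℝ)
    (hTmeas : ∀ N i, Measurable (T N i))
    (hTindep : ∀ N, iIndepFun (T N) (P N))
    (hTlaw : ∀ N i, Measure.map (T N i) (P N) = bernoulliReal π) :
    ∀ ε > (0 : ℝ),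
      Filter.Tendsto
        (fun N : ℕ => (P N) {ω | ε ≤ ⨆ f : BL,
          |(∑ i, T N i ω * f.1 (y N i)) / ((N : ℝ) * π)
            - (∑ i, f.1 (y N i)) / (N : ℝ)|})
        Filter.atTop (nhds 0) := by
  obtain ⟨hπ0, hπ1⟩ := hπ
  intro ε hε
  have hπne : π ≠ 0 := ne_of_gt hπ0
  set δ : ℝ := π * ε / 4 with hδdef
  have hδ : 0 < δ := by positivity
  set M : ℝ := 4 * C / (π * ε) with hMdef
  have hM : 0 < M := by positivity
  set K : ℕ := ⌈2 * M / δ⌉₊ with hKdef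
  have hK : M ≤ -M + K * δ := by
    have h1 : 2 * M / δ ≤ (K : ℝ) := Nat.le_ceil _
    rw [div_le_iff₀ hδ] at h1
    linarith
  have hmain : ∀ N : ℕ, 1 ≤ N →
      (P N) {ω | ε ≤ ⨆ f : BL,
        |(∑ i, T N i ω * f.1 (y N i)) / ((N : ℝ) * π) - (∑ i, f.1 (y N i)) / (N : ℝ)|}
      ≤ ENNReal.ofReal (2 * K / (ε * Real.sqrt (N * π))) := by
    intro N hN
    have hNpos : (0:ℝ) < N := by exact_mod_cast hN
    set cell : ℕ → Finset (Fin N) := fun j => Finset.univ.filter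
      (fun i => (-M ≤ y N i ∧ y N i < -M + K * δ) ∧ ⌊(y N i + M) / δ⌋₊ = j) with hcell
    set S : Ω N → ℝ :=
      fun ω => ∑ j ∈ Finset.range K, |∑ i ∈ cell j, (T N i ω / π - 1)| / (N : ℝ) with hSdef
    have hSint : Integrable S (P N) := integrable_finset_sum _
      (fun j _ => GC_cell_int hπ0 hπ1 (T N) (hTmeas N) (hTlaw N) (cell j))
    have hSnonneg : ∀ ω, 0 ≤ S ω := fun ω => Finset.sum_nonneg fun j _ => by positivity
    have hES : ∫ ω, S ω ∂(P N) ≤ (K : ℝ) / Real.sqrt (N * π) := by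
      rw [hSdef]
      rw [integral_finset_sum _
        (fun j _ => GC_cell_int hπ0 hπ1 (T N) (hTmeas N) (hTlaw N) (cell j))]
      calc ∑ j ∈ Finset.range K, ∫ ω, |∑ i ∈ cell j, (T N i ω / π - 1)| / (N : ℝ) ∂(P N)
          ≤ ∑ j ∈ Finset.range K, 1 / Real.sqrt ((N : ℝ) * π) :=
            Finset.sum_le_sum (fun j _ => GC_cell_exp hπ0 hπ1 hN (T N) (hTmeas N)
              (hTindep N) (hTlaw N) (cell j))
        _ = (K : ℝ) / Real.sqrt ((N : ℝ) * π) := by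
            rw [Finset.sum_const, Finset.card_range, nsmul_eq_mul]
            ring
    have hG : ∀ᵐ ω ∂(P N), ∀ i, T N i ω = 0 ∨ T N i ω = 1 :=
      MeasureTheory.ae_all_iff.2 fun i =>
        T_ae (le_of_lt hπ0) (le_of_lt hπ1) (hTmeas N i) (hTlaw N i)
    set G : Set (Ω N) := {ω | ∀ i, T N i ω = 0 ∨ T N i ω = 1} with hGdef
    have hGc : (P N) Gᶜ = 0 := by
      have := ae_iff.mp hG
      convert this using 2
      rfl
    set A : Set (Ω N) := {ω | ε ≤ ⨆ f : BL,
      |(∑ i, T N i ω * f.1 (y N i)) / ((N : ℝ) * π) - (∑ i, f.1 (y N i)) / (N : ℝ)|} with hAdef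
    have hsub : A ∩ G ⊆ {ω | ε/2 ≤ S ω} := by
      rintro ω ⟨hA, hGω⟩
      have hle : ∀ f : BL,
          |(∑ i, T N i ω * f.1 (y N i)) / ((N : ℝ) * π) - (∑ i, f.1 (y N i)) / (N : ℝ)|
          ≤ S ω + ε/2 := by
        intro f
        have hdet : |(∑ i, T N i ω * f.1 (y N i)) / ((N : ℝ) * π)
            - (∑ i, f.1 (y N i)) / (N : ℝ)|
            ≤ S ω + δ / π + (∑ i, |y N i|) / ((N : ℝ) * M * π) :=
          det_bound hπ0 (le_of_lt hπ1) hδ hM hK hN (y N) (fun i => T N i ω) hGω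
            f.1 f.2.1 f.2.2
        have h1 : δ / π = ε / 4 := by rw [hδdef]; field_simp
        have h2 : (∑ i, |y N i|) / ((N : ℝ) * M * π) ≤ ε / 4 := by
          have hm := hmom N hN
          have he : (∑ i, |y N i|) / ((N : ℝ) * M * π)
              = ((∑ i, |y N i|) / (N : ℝ)) / (M * π) := by
            rw [div_div, mul_assoc]
          rw [he]
          have hstep : ((∑ i, |y N i|) / (N : ℝ)) / (M * π) ≤ C / (M * π) :=
            (div_le_div_iff_of_pos_right (by positivity)).mpr hm
          have hCM : C / (M * π) = ε / 4 := by
            rw [hMdef]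
            have hCne : C ≠ 0 := ne_of_gt hC
            have hεne : ε ≠ 0 := ne_of_gt hε
            field_simp
          exact hstep.trans_eq hCM
        linarith [hdet, h1, h2]
      have hsup : (⨆ f : BL,
          |(∑ i, T N i ω * f.1 (y N i)) / ((N : ℝ) * π) - (∑ i, f.1 (y N i)) / (N : ℝ)|)
          ≤ S ω + ε/2 := ciSup_le hle
      have hεle : ε ≤ S ω + ε/2 := le_trans hA hsup
      simp only [Set.mem_setOf_eq]
      linarith
    have hmark := mul_meas_ge_le_integral_of_nonneg
      (Filter.Eventually.of_forall hSnonneg) hSint (ε/2)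
    have hsqrtpos : 0 < Real.sqrt ((N : ℝ) * π) := Real.sqrt_pos.mpr (by positivity)
    have htoReal : ((P N) {ω | ε/2 ≤ S ω}).toReal ≤ 2 * K / (ε * Real.sqrt (N * π)) := by
      have h3 : ε/2 * ((P N) {ω | ε/2 ≤ S ω}).toReal ≤ (K : ℝ) / Real.sqrt (N * π) :=
        le_trans hmark hES
      rw [le_div_iff₀ (by positivity : (0:ℝ) < ε * Real.sqrt ((N:ℝ) * π))]
      have h4 : (ε / 2 * ((P N) {ω | ε/2 ≤ S ω}).toReal) * Real.sqrt ((N:ℝ) * π)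
          ≤ (K : ℝ) := by
        have h5 := mul_le_mul_of_nonneg_right h3 (le_of_lt hsqrtpos)
        rwa [div_mul_cancel₀ _ (ne_of_gt hsqrtpos)] at h5
      calc ((P N) {ω | ε/2 ≤ S ω}).toReal * (ε * Real.sqrt ((N:ℝ) * π))
          = 2 * ((ε / 2 * ((P N) {ω | ε/2 ≤ S ω}).toReal) * Real.sqrt ((N:ℝ) * π)) := by
            ring
        _ ≤ 2 * K := by linarith [h4]
    calc (P N) A ≤ (P N) ((A ∩ G) ∪ Gᶜ) := by
          refine measure_mono fun ω hω => ?_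
          by_cases h : ω ∈ G
          · exact Or.inl ⟨hω, h⟩
          · exact Or.inr h
      _ ≤ (P N) (A ∩ G) + (P N) Gᶜ := measure_union_le _ _
      _ = (P N) (A ∩ G) := by rw [hGc, add_zero]
      _ ≤ (P N) {ω | ε/2 ≤ S ω} := measure_mono hsub
      _ ≤ ENNReal.ofReal (2 * K / (ε * Real.sqrt (N * π))) := by
          rw [← ENNReal.ofReal_toReal (measure_ne_top (P N) {ω | ε/2 ≤ S ω})]
          exact ENNReal.ofReal_le_ofReal htoReal
  -- squeeze
  have hb : Filter.Tendsto (fun N : ℕ => ENNReal.ofReal (2 * K / (ε * Real.sqrt (N * π))))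
      Filter.atTop (nhds 0) := by
    have hr : Filter.Tendsto (fun N : ℕ => 2 * (K:ℝ) / (ε * Real.sqrt (N * π)))
        Filter.atTop (nhds 0) := by
      apply Filter.Tendsto.div_atTop tendsto_const_nhds
      apply Filter.Tendsto.const_mul_atTop hε
      exact GC_sqrt_atTop.comp (tendsto_natCast_atTop_atTop.atTop_mul_const hπ0)
    have := ENNReal.tendsto_ofReal hr
    simpa using this
  refine tendsto_of_tendsto_of_tendsto_of_le_of_le' tendsto_const_nhds hb
    (Filter.Eventually.of_forall fun N => zero_le) ?_
  filter_upwards [Filter.eventually_ge_atTop 1] with N hN using hmain N hN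
end

section
/- For one-dimensional CDFs define the Lévy distance d_L(F₁,F₂) = inf{ ε > 0 : F₁(x−ε) − ε ≤ F₂(x) ≤ F₁(x+ε) + ε for all x ∈ ℝ }, and for bivariate CDFs define d_L(H₁,H₂) = inf{ ε > 0 : H₁(x−ε, y−ε) − ε ≤ H₂(x,y) ≤ H₁(x+ε, y+ε) + ε for all (x,y) ∈ ℝ² }. Let G₁, G₂, F₁, F₂ be CDFs of probability measures on ℝ and define the upper-Fréchet bivariate CDFs H_k(x,y) = min(G_k(x), F_k(y)) for k = 1, 2. Then d_L(H₁, H₂) ≤ 2 ( d_L(G₁,G₂) + d_L(F₁,F₂) ). In particular, if Ĝ_N → G and F̂_N → F in Lévy distance, then the corresponding comonotonic (upper-Fréchet) joint CDFs min(Ĝ_N, F̂_N) converge to min(G,F) in the bivariate Lévy distance, i.e., weakly. -/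
open MeasureTheory

/-- The CDF of a measure on `ℝ`. -/
noncomputable def cdfOf (μ : Measure ℝ) : ℝ → ℝ := fun x => (μ (Set.Iic x)).toReal

/-- The Lévy distance between two one-dimensional CDFs. -/
noncomputable def levy1 (F₁ F₂ : ℝ → ℝ) : ℝ :=
  sInf {ε : ℝ | 0 < ε ∧ ∀ x, F₁ (x - ε) - ε ≤ F₂ x ∧ F₂ x ≤ F₁ (x + ε) + ε}

/-- The Lévy distance between two bivariate CDFs. -/
noncomputable def levy2 (H₁ H₂ : ℝ → ℝ → ℝ) : ℝ :=
  sInf {ε : ℝ | 0 < ε ∧ ∀ x y,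
    H₁ (x - ε) (y - ε) - ε ≤ H₂ x y ∧ H₂ x y ≤ H₁ (x + ε) (y + ε) + ε}

lemma cdf_mono (μ : Measure ℝ) [IsFiniteMeasure μ] : Monotone (cdfOf μ) := by
  intro a b hab
  exact ENNReal.toReal_mono (measure_ne_top μ _) (measure_mono (Set.Iic_subset_Iic.2 hab))

lemma cdf_nonneg (μ : Measure ℝ) (x : ℝ) : 0 ≤ cdfOf μ x := ENNReal.toReal_nonneg

lemma cdf_le_one (μ : Measure ℝ) [IsProbabilityMeasure μ] (x : ℝ) : cdfOf μ x ≤ 1 := by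
  unfold cdfOf
  have := prob_le_one (μ := μ) (s := Set.Iic x)
  exact ENNReal.toReal_le_of_le_ofReal zero_le_one (by simpa using this)

lemma one_mem_levy1_set (μ₁ μ₂ : Measure ℝ) [IsProbabilityMeasure μ₁] [IsProbabilityMeasure μ₂] :
    (1:ℝ) ∈ {ε : ℝ | 0 < ε ∧ ∀ x,
      cdfOf μ₁ (x - ε) - ε ≤ cdfOf μ₂ x ∧ cdfOf μ₂ x ≤ cdfOf μ₁ (x + ε) + ε} := by
  refine ⟨one_pos, fun x => ⟨?_, ?_⟩⟩
  · have := cdf_le_one μ₁ (x - 1); have := cdf_nonneg μ₂ x; linarith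
  · have := cdf_le_one μ₂ x; have := cdf_nonneg μ₁ (x + 1); linarith

lemma levy1_set_bddBelow (μ₁ μ₂ : Measure ℝ) :
    BddBelow {ε : ℝ | 0 < ε ∧ ∀ x,
      cdfOf μ₁ (x - ε) - ε ≤ cdfOf μ₂ x ∧ cdfOf μ₂ x ≤ cdfOf μ₁ (x + ε) + ε} :=
  ⟨0, fun ε hε => le_of_lt hε.1⟩

lemma levy1_nonneg (μ₁ μ₂ : Measure ℝ) [IsProbabilityMeasure μ₁] [IsProbabilityMeasure μ₂] :
    0 ≤ levy1 (cdfOf μ₁) (cdfOf μ₂) :=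
  le_csInf ⟨1, one_mem_levy1_set μ₁ μ₂⟩ (fun ε hε => le_of_lt hε.1)

lemma add_mem_levy2_set (μG₁ μG₂ μF₁ μF₂ : Measure ℝ)
    [IsProbabilityMeasure μG₁] [IsProbabilityMeasure μG₂]
    [IsProbabilityMeasure μF₁] [IsProbabilityMeasure μF₂] {a b : ℝ}
    (ha : a ∈ {ε : ℝ | 0 < ε ∧ ∀ x,
      cdfOf μG₁ (x - ε) - ε ≤ cdfOf μG₂ x ∧ cdfOf μG₂ x ≤ cdfOf μG₁ (x + ε) + ε})
    (hb : b ∈ {ε : ℝ | 0 < ε ∧ ∀ x,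
      cdfOf μF₁ (x - ε) - ε ≤ cdfOf μF₂ x ∧ cdfOf μF₂ x ≤ cdfOf μF₁ (x + ε) + ε}) :
    a + b ∈ {ε : ℝ | 0 < ε ∧ ∀ x y,
      min (cdfOf μG₁ (x - ε)) (cdfOf μF₁ (y - ε)) - ε ≤ min (cdfOf μG₂ x) (cdfOf μF₂ y) ∧
      min (cdfOf μG₂ x) (cdfOf μF₂ y) ≤ min (cdfOf μG₁ (x + ε)) (cdfOf μF₁ (y + ε)) + ε} := by
  obtain ⟨ha0, haP⟩ := ha
  obtain ⟨hb0, hbP⟩ := hb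
  refine ⟨by linarith, fun x y => ⟨?_, ?_⟩⟩
  · refine le_min ?_ ?_
    · have h1 : cdfOf μG₁ (x - (a + b)) ≤ cdfOf μG₁ (x - a) :=
        cdf_mono μG₁ (by linarith)
      have h2 := (haP x).1
      have h3 : min (cdfOf μG₁ (x - (a + b))) (cdfOf μF₁ (y - (a + b)))
          ≤ cdfOf μG₁ (x - (a + b)) := min_le_left _ _
      linarith
    · have h1 : cdfOf μF₁ (y - (a + b)) ≤ cdfOf μF₁ (y - b) :=
        cdf_mono μF₁ (by linarith)
      have h2 := (hbP y).1
      have h3 : min (cdfOf μG₁ (x - (a + b))) (cdfOf μF₁ (y - (a + b)))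
          ≤ cdfOf μF₁ (y - (a + b)) := min_le_right _ _
      linarith
  · have h1 : cdfOf μG₁ (x + a) ≤ cdfOf μG₁ (x + (a + b)) := cdf_mono μG₁ (by linarith)
    have h2 : cdfOf μF₁ (y + b) ≤ cdfOf μF₁ (y + (a + b)) := cdf_mono μF₁ (by linarith)
    have h3 := (haP x).2
    have h4 := (hbP y).2
    have h5 : min (cdfOf μG₂ x) (cdfOf μF₂ y) ≤ cdfOf μG₂ x := min_le_left _ _
    have h6 : min (cdfOf μG₂ x) (cdfOf μF₂ y) ≤ cdfOf μF₂ y := min_le_right _ _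
    calc min (cdfOf μG₂ x) (cdfOf μF₂ y)
        ≤ min (cdfOf μG₁ (x + (a + b)) + (a + b)) (cdfOf μF₁ (y + (a + b)) + (a + b)) :=
          le_min (by linarith) (by linarith)
      _ = min (cdfOf μG₁ (x + (a + b))) (cdfOf μF₁ (y + (a + b))) + (a + b) :=
          (min_add_add_right _ _ _)

lemma levy2_le (μG₁ μG₂ μF₁ μF₂ : Measure ℝ)
    [IsProbabilityMeasure μG₁] [IsProbabilityMeasure μG₂]
    [IsProbabilityMeasure μF₁] [IsProbabilityMeasure μF₂] :
    levy2 (fun x y => min (cdfOf μG₁ x) (cdfOf μF₁ y))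
        (fun x y => min (cdfOf μG₂ x) (cdfOf μF₂ y))
      ≤ levy1 (cdfOf μG₁) (cdfOf μG₂) + levy1 (cdfOf μF₁) (cdfOf μF₂) := by
  refine le_of_forall_pos_lt_add fun δ hδ => ?_
  obtain ⟨a, ha, halt⟩ := Real.lt_sInf_add_pos ⟨1, one_mem_levy1_set μG₁ μG₂⟩ (half_pos hδ)
  obtain ⟨b, hb, hblt⟩ := Real.lt_sInf_add_pos ⟨1, one_mem_levy1_set μF₁ μF₂⟩ (half_pos hδ)
  have hmem := add_mem_levy2_set μG₁ μG₂ μF₁ μF₂ ha hb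
  have hle : levy2 (fun x y => min (cdfOf μG₁ x) (cdfOf μF₁ y))
      (fun x y => min (cdfOf μG₂ x) (cdfOf μF₂ y)) ≤ a + b := by
    apply csInf_le ⟨0, fun ε hε => le_of_lt hε.1⟩
    exact hmem
  have : a + b < levy1 (cdfOf μG₁) (cdfOf μG₂) + levy1 (cdfOf μF₁) (cdfOf μF₂) + δ := by
    unfold levy1; linarith
  linarith

lemma levy2_nonneg (μG₁ μG₂ μF₁ μF₂ : Measure ℝ)
    [IsProbabilityMeasure μG₁] [IsProbabilityMeasure μG₂]
    [IsProbabilityMeasure μF₁] [IsProbabilityMeasure μF₂] :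
    0 ≤ levy2 (fun x y => min (cdfOf μG₁ x) (cdfOf μF₁ y))
        (fun x y => min (cdfOf μG₂ x) (cdfOf μF₂ y)) := by
  exact le_csInf ⟨1 + 1, add_mem_levy2_set μG₁ μG₂ μF₁ μF₂ (one_mem_levy1_set μG₁ μG₂)
    (one_mem_levy1_set μF₁ μF₂)⟩ (fun ε hε => le_of_lt hε.1)

/-- **Lévy-distance stability of the upper Fréchet–Hoeffding joint CDF.** For CDFs
`G₁, G₂, F₁, F₂` of probability measures on `ℝ`, the comonotonic joint CDFs
`H_k(x,y) = min (G_k x) (F_k y)` satisfy `d_L(H₁,H₂) ≤ 2 (d_L(G₁,G₂) + d_L(F₁,F₂))`.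
In particular, if `Ĝ_N → G` and `F̂_N → F` in Lévy distance then
`min (Ĝ_N) (F̂_N) → min G F` in the bivariate Lévy distance. -/
theorem stmt_14 :
    (∀ (μG₁ μG₂ μF₁ μF₂ : Measure ℝ),
      IsProbabilityMeasure μG₁ → IsProbabilityMeasure μG₂ →
      IsProbabilityMeasure μF₁ → IsProbabilityMeasure μF₂ →
      levy2 (fun x y => min (cdfOf μG₁ x) (cdfOf μF₁ y))
          (fun x y => min (cdfOf μG₂ x) (cdfOf μF₂ y))
        ≤ 2 * (levy1 (cdfOf μG₁) (cdfOf μG₂) + levy1 (cdfOf μF₁) (cdfOf μF₂)))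
    ∧ (∀ (μG μF : Measure ℝ) (μGs μFs : ℕ → Measure ℝ),
      IsProbabilityMeasure μG → IsProbabilityMeasure μF →
      (∀ n, IsProbabilityMeasure (μGs n)) → (∀ n, IsProbabilityMeasure (μFs n)) →
      Filter.Tendsto (fun n => levy1 (cdfOf (μGs n)) (cdfOf μG)) Filter.atTop (nhds 0) →
      Filter.Tendsto (fun n => levy1 (cdfOf (μFs n)) (cdfOf μF)) Filter.atTop (nhds 0) →
      Filter.Tendsto
        (fun n => levy2 (fun x y => min (cdfOf (μGs n) x) (cdfOf (μFs n) y))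
          (fun x y => min (cdfOf μG x) (cdfOf μF y)))
        Filter.atTop (nhds 0)) := by
  constructor
  · intro μG₁ μG₂ μF₁ μF₂ h1 h2 h3 h4
    have := levy2_le μG₁ μG₂ μF₁ μF₂
    have hG := levy1_nonneg μG₁ μG₂
    have hF := levy1_nonneg μF₁ μF₂
    linarith
  · intro μG μF μGs μFs hG hF hGs hFs hGt hFt
    have := fun n => hGs n
    have := fun n => hFs n
    have hbound : ∀ n, levy2 (fun x y => min (cdfOf (μGs n) x) (cdfOf (μFs n) y))
        (fun x y => min (cdfOf μG x) (cdfOf μF y))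
        ≤ levy1 (cdfOf (μGs n)) (cdfOf μG) + levy1 (cdfOf (μFs n)) (cdfOf μF) := by
      intro n
      have := hGs n; have := hFs n
      exact levy2_le (μGs n) μG (μFs n) μF
    have hnn : ∀ n, 0 ≤ levy2 (fun x y => min (cdfOf (μGs n) x) (cdfOf (μFs n) y))
        (fun x y => min (cdfOf μG x) (cdfOf μF y)) := by
      intro n
      have := hGs n; have := hFs n
      exact levy2_nonneg (μGs n) μG (μFs n) μF
    have hsum : Filter.Tendsto
        (fun n => levy1 (cdfOf (μGs n)) (cdfOf μG) + levy1 (cdfOf (μFs n)) (cdfOf μF))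
        Filter.atTop (nhds 0) := by
      simpa using hGt.add hFt
    exact squeeze_zero hnn hbound hsum
end
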